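/- Let K be a field of characteristic not 2 and λ ∈ K \ {0, ±1}. Let Q be a point of the curve E: y² = (x+λ²)(x+1)x with x(Q) = λ. Then Q is divisible by 2 in E(K) if and only if there exists c ∈ K \ {0, ±1, ±1±√2, ±√−1} such that λ = ((c − 1/c)/2)². -/

import Mathlib

/-- The elliptic curve `y² = (x − α₁)(x − α₂)(x − α₃)` as an affine Weierstrass curve. -/
def cubicCurve {K : Type*} [Field K] (α₁ α₂ α₃ : K) : WeierstrassCurve.Affine K :=
  { a₁ := 0, a₂ := -(α₁ + α₂ + α₃), a₃ := 0,
    a₄ := α₁ * α₂ + α₂ * α₃ + α₃ * α₁, a₆ := -(α₁ * α₂ * α₃) }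

/-- `c` avoids the exceptional set `{0, ±1, ±1±√2, ±√−1}`: equivalently `c ≠ 0`, `c ≠ ±1`,
`((c−1/c)/2)² ≠ 1` and `((c−1/c)/2)² ≠ −1`. -/
def GoodParam {K : Type*} [Field K] (c : K) : Prop :=
  c ≠ 0 ∧ c ≠ 1 ∧ c ≠ -1 ∧ ((c - 1 / c) / 2) ^ 2 ≠ 1 ∧ ((c - 1 / c) / 2) ^ 2 ≠ -1

open WeierstrassCurve.Affine WeierstrassCurve.Affine.Point in
private lemma some_eq_some' {K : Type*} [Field K] {W : WeierstrassCurve.Affine K}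
    {x₁ y₁ x₂ y₂ : K} (hx : x₁ = x₂) (hy : y₁ = y₂)
    (h₁ : W.Nonsingular x₁ y₁) (h₂ : W.Nonsingular x₂ y₂) :
    Point.some _ _ h₁ = Point.some _ _ h₂ := by
  subst hx; subst hy; rfl

open Classical in
open WeierstrassCurve.Affine WeierstrassCurve.Affine.Point in
private lemma exists_half {K : Type*} [Field K] (h2 : (2 : K) ≠ 0) (t s : K)
    (hs : s ^ 2 = t ^ 2 + 1) (ht0 : t ≠ 0) (ht1 : 1 + t ≠ 0) (hs0 : s ≠ 0) (hs1 : 1 + s ≠ 0)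
    (yQ : K) (hQ : (cubicCurve (-((t ^ 2) ^ 2)) (-1) 0).Nonsingular (t ^ 2) yQ) :
    ∃ R : (cubicCurve (-((t ^ 2) ^ 2)) (-1) 0).Point,
      2 • R = WeierstrassCurve.Affine.Point.some _ _ hQ := by
  let W := cubicCurve (-((t ^ 2) ^ 2)) (-1) 0
  have hW : W = cubicCurve (-((t ^ 2) ^ 2)) (-1) 0 := rfl
  have ha1 : W.a₁ = 0 := rfl
  have ha3 : W.a₃ = 0 := rfl
  have ha2 : W.a₂ = (t ^ 2) ^ 2 + 1 := by show -(-((t ^ 2) ^ 2) + -1 + 0) = _; ring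
  have ha4 : W.a₄ = (t ^ 2) ^ 2 := by
    show -((t ^ 2) ^ 2) * -1 + -1 * 0 + 0 * -((t ^ 2) ^ 2) = _; ring
  have ha6 : W.a₆ = 0 := by show -(-((t ^ 2) ^ 2) * -1 * 0) = _; ring
  have hneg : ∀ a b : K, W.negY a b = -b := by
    intro a b; rw [negY, ha1, ha3]; ring
  have hts : t + s ≠ 0 := by
    intro h
    have hst : s = -t := by linear_combination h
    rw [hst] at hs
    have : (0 : K) = 1 := by linear_combination hs
    exact zero_ne_one this
  -- the y-coordinate of Q is ± t²(t²+1)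
  have hyQsq : (yQ - t ^ 2 * (t ^ 2 + 1)) * (yQ + t ^ 2 * (t ^ 2 + 1)) = 0 := by
    have h' := (W.equation_iff (t ^ 2) yQ).mp hQ.1
    rw [ha1, ha2, ha3, ha4, ha6] at h'
    linear_combination h'
  obtain ⟨e, he, he0, hyQ⟩ : ∃ e : K, e ^ 2 = 1 ∧ e ≠ 0 ∧ yQ = e * (t ^ 2 * (t ^ 2 + 1)) := by
    rcases mul_eq_zero.mp hyQsq with h' | h'
    · exact ⟨1, by ring, one_ne_zero, by linear_combination h'⟩
    · exact ⟨-1, by ring, by simpa using (one_ne_zero : (1 : K) ≠ 0), by linear_combination h'⟩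
  set xR : K := t * (t + s) * (1 + s) with hxR
  set yy : K := e * (t * s * (1 + t) * (1 + s) * (t + s)) with hyy
  have hyy0 : yy ≠ 0 := by
    rw [hyy]
    exact mul_ne_zero he0 (mul_ne_zero (mul_ne_zero (mul_ne_zero (mul_ne_zero ht0 hs0) ht1) hs1) hts)
  have h2yy : (2 : K) * yy ≠ 0 := mul_ne_zero h2 hyy0
  have hEq : W.Equation xR yy := by
    rw [equation_iff, ha1, ha2, ha3, ha4, ha6, hxR, hyy]
    linear_combination (t ^ 2 * s ^ 2 + (2 : K) * t ^ 2 * s ^ 3 + t ^ 2 * s ^ 4 + (2 : K) * t ^ 3 * s + (4 : K) * t ^ 3 * s ^ 2 + (3 : K) * t ^ 3 * s ^ 3 + t ^ 3 * s ^ 4 + t ^ 4 + (2 : K) * t ^ 4 * s + (3 : K) * t ^ 4 * s ^ 2 + (3 : K) * t ^ 4 * s ^ 3 + t ^ 4 * s ^ 4 + (2 : K) * t ^ 5 * s + (4 : K) * t ^ 5 * s ^ 2 + (2 : K) * t ^ 5 * s ^ 3 + t ^ 6 + (2 : K) * t ^ 6 * s + t ^ 6 * s ^ 2) * hs + (t ^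 2 * s ^ 4 + (2 : K) * t ^ 2 * s ^ 5 + t ^ 2 * s ^ 6 + (2 : K) * t ^ 3 * s ^ 3 + (6 : K) * t ^ 3 * s ^ 4 + (6 : K) * t ^ 3 * s ^ 5 + (2 : K) * t ^ 3 * s ^ 6 + t ^ 4 * s ^ 2 + (6 : K) * t ^ 4 * s ^ 3 + (10 : K) * t ^ 4 * s ^ 4 + (6 : K) * t ^ 4 * s ^ 5 + t ^ 4 * s ^ 6 + (2 : K) * t ^ 5 * s ^ 2 + (6 : K) * t ^ 5 * s ^ 3 + (6 : K) * t ^ 5 * s ^ 4 + (2 : K) * t ^ 5 * s ^ 5 + t ^ 6 * s ^ 2 + (2 : K) * t ^ 6 * s ^ 3 + t ^ 6 * s ^ 4) * he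
  have hNS : W.Nonsingular xR yy := by
    rw [nonsingular_iff, ha1, ha2, ha3, ha4]
    refine ⟨hEq, Or.inr fun hcon => hyy0 ?_⟩
    have h2y : 2 * yy = 0 := by linear_combination hcon
    rcases mul_eq_zero.mp h2y with h' | h'
    · exact absurd h' h2
    · exact h'
  have hyne : yy ≠ W.negY xR yy := by
    rw [hneg]
    intro hcon
    have h2y : 2 * yy = 0 := by linear_combination hcon
    rcases mul_eq_zero.mp h2y with h' | h'
    · exact absurd h' h2
    · exact absurd h' hyy0
  have hL : W.slope xR xR yy yy =
      (3 * xR ^ 2 + 2 * ((t ^ 2) ^ 2 + 1) * xR + (t ^ 2) ^ 2) / (2 * yy) := by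
    rw [slope_of_Y_ne rfl hyne, ha1, ha2, ha4, hneg]
    rw [div_eq_div_iff (fun hcon => hyy0 ((mul_eq_zero.mp
      (show 2 * yy = 0 by linear_combination hcon)).resolve_left h2)) h2yy]
    ring
  have hN2 : (3 * xR ^ 2 + 2 * ((t ^ 2) ^ 2 + 1) * xR + (t ^ 2) ^ 2) ^ 2 =
      (t ^ 2 + ((t ^ 2) ^ 2 + 1) + 2 * xR) * (2 * yy) ^ 2 := by
    rw [hxR, hyy]
    linear_combination ((-4 : K) * t ^ 2 * s ^ 2 + (-8 : K) * t ^ 2 * s ^ 3 + (-4 : K) * t ^ 2 * s ^ 4 + (-8 : K) * t ^ 3 * s + (-16 : K) * t ^ 3 * s ^ 2 + (-20 : K) * t ^ 3 * s ^ 3 + (-28 : K) * t ^ 3 * s ^ 4 + (-24 : K) * t ^ 3 * s ^ 5 + (-8 : K) * t ^ 3 * s ^ 6 + (-4 : K) * t ^ 4 + (-8 : K) * t ^ 4 * s + (-36 : K) * t ^ 4 * s ^ 2 + (-84 : K) * t ^ 4 * s ^ 3 + (-81 : K) * t ^ 4 * s ^ 4 + (-36 : K) * t ^ 4 * s ^ 5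 + (-7 : K) * t ^ 4 * s ^ 6 + (-32 : K) * t ^ 5 * s + (-88 : K) * t ^ 5 * s ^ 2 + (-100 : K) * t ^ 5 * s ^ 3 + (-72 : K) * t ^ 5 * s ^ 4 + (-36 : K) * t ^ 5 * s ^ 5 + (-8 : K) * t ^ 5 * s ^ 6 + (-12 : K) * t ^ 6 + (-32 : K) * t ^ 6 * s + (-64 : K) * t ^ 6 * s ^ 2 + (-100 : K) * t ^ 6 * s ^ 3 + (-81 : K) * t ^ 6 * s ^ 4 + (-24 : K) * t ^ 6 * s ^ 5 + (-32 : K) * t ^ 7 * s + (-88 : K) * t ^ 7 * s ^ 2 + (-84 : K) * t ^ 7 * s ^ 3 + (-28 : K) * t ^ 7 * s ^ 4 + (-12 : K) * t ^ 8 + (-32 : K) * t ^ 8 * s + (-36 : K) * t ^ 8 * s ^ 2 + (-20 : K) * t ^ 8 * s ^ 3 + (-4 : K) * t ^ 8 * s ^ 4 + (-8 : K) * t ^ 9 * s + (-16 : K) * t ^ 9 * s ^ 2 + (-8 : K) * t ^ 9 * s ^ 3 + (-4 : K) * t ^ 10 + (-8 : K) * t ^ 10 * s + (-4 : K) * t ^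 10 * s ^ 2) * hs + ((-4 : K) * t ^ 2 * s ^ 4 + (-8 : K) * t ^ 2 * s ^ 5 + (-4 : K) * t ^ 2 * s ^ 6 + (-8 : K) * t ^ 3 * s ^ 3 + (-24 : K) * t ^ 3 * s ^ 4 + (-32 : K) * t ^ 3 * s ^ 5 + (-32 : K) * t ^ 3 * s ^ 6 + (-24 : K) * t ^ 3 * s ^ 7 + (-8 : K) * t ^ 3 * s ^ 8 + (-4 : K) * t ^ 4 * s ^ 2 + (-24 : K) * t ^ 4 * s ^ 3 + (-68 : K) * t ^ 4 * s ^ 4 + (-120 : K) * t ^ 4 * s ^ 5 + (-128 : K) * t ^ 4 * s ^ 6 + (-72 : K) * t ^ 4 * s ^ 7 + (-16 : K) * t ^ 4 * s ^ 8 + (-8 : K) * t ^ 5 * s ^ 2 + (-56 : K) * t ^ 5 * s ^ 3 + (-168 : K) * t ^ 5 * s ^ 4 + (-256 : K) * t ^ 5 * s ^ 5 + (-200 : K) * t ^ 5 * s ^ 6 + (-72 : K) * t ^ 5 * s ^ 7 + (-8 : K) * t ^ 5 * s ^ 8 + (-16 : K) * t ^ 6 * s ^ 2 + (-104 : K) *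 t ^ 6 * s ^ 3 + (-240 : K) * t ^ 6 * s ^ 4 + (-256 : K) * t ^ 6 * s ^ 5 + (-128 : K) * t ^ 6 * s ^ 6 + (-24 : K) * t ^ 6 * s ^ 7 + (-24 : K) * t ^ 7 * s ^ 2 + (-104 : K) * t ^ 7 * s ^ 3 + (-168 : K) * t ^ 7 * s ^ 4 + (-120 : K) * t ^ 7 * s ^ 5 + (-32 : K) * t ^ 7 * s ^ 6 + (-16 : K) * t ^ 8 * s ^ 2 + (-56 : K) * t ^ 8 * s ^ 3 + (-68 : K) * t ^ 8 * s ^ 4 + (-32 : K) * t ^ 8 * s ^ 5 + (-4 : K) * t ^ 8 * s ^ 6 + (-8 : K) * t ^ 9 * s ^ 2 + (-24 : K) * t ^ 9 * s ^ 3 + (-24 : K) * t ^ 9 * s ^ 4 + (-8 : K) * t ^ 9 * s ^ 5 + (-4 : K) * t ^ 10 * s ^ 2 + (-8 : K) * t ^ 10 * s ^ 3 + (-4 : K) * t ^ 10 * s ^ 4) * he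
  have hxcoord : W.addX xR xR (W.slope xR xR yy yy) = t ^ 2 := by
    rw [addX, hL, ha1, ha2, div_pow, hN2, mul_div_assoc,
      div_self (pow_ne_zero 2 h2yy), mul_one]
    ring
  have hycoord : W.addY xR xR yy (W.slope xR xR yy yy) = yQ := by
    rw [addY, hneg, negAddY, hxcoord, hL, hyQ]
    rw [show (3 * xR ^ 2 + 2 * ((t ^ 2) ^ 2 + 1) * xR + (t ^ 2) ^ 2) / (2 * yy) * (t ^ 2 - xR) + yy
        = ((3 * xR ^ 2 + 2 * ((t ^ 2) ^ 2 + 1) * xR + (t ^ 2) ^ 2) * (t ^ 2 - xR) + yy * (2 * yy))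
          / (2 * yy) by field_simp]
    rw [neg_eq_iff_eq_neg, div_eq_iff h2yy, hxR, hyy]
    linear_combination ((2 : K) * t ^ 2 * s ^ 2 + (4 : K) * t ^ 2 * s ^ 3 + (2 : K) * t ^ 2 * s ^ 4 + (2 : K) * t ^ 3 * s + (4 : K) * t ^ 3 * s ^ 2 + (3 : K) * t ^ 3 * s ^ 3 + t ^ 3 * s ^ 4 + (3 : K) * t ^ 4 * s ^ 3 + (2 : K) * t ^ 4 * s ^ 4 + (4 : K) * t ^ 5 * s ^ 2 + (4 : K) * t ^ 5 * s ^ 3 + (2 : K) * t ^ 6 * s + (2 : K) * t ^ 6 * s ^ 2) * hs + ((2 : K) * t ^ 2 * s ^ 4 + (4 : K) * t ^ 2 * s ^ 5 + (2 : K) * t ^ 2 * s ^ 6 + (2 : K) * t ^ 3 * s ^ 2 + (6 : K) * t ^ 3 * s ^ 3 + (12 : K) * t ^ 3 * s ^ 4 + (12 : K) * t ^ 3 * s ^ 5 + (4 : K) * t ^ 3 * s ^ 6 + (2 : K) * t ^ 4 * s + (6 : K) * t ^ 4 * s ^ 2 + (14 : K) * t ^ 4 * s ^ 3 + (20 : K)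 * t ^ 4 * s ^ 4 + (12 : K) * t ^ 4 * s ^ 5 + (2 : K) * t ^ 4 * s ^ 6 + (2 : K) * t ^ 5 * s + (8 : K) * t ^ 5 * s ^ 2 + (14 : K) * t ^ 5 * s ^ 3 + (12 : K) * t ^ 5 * s ^ 4 + (4 : K) * t ^ 5 * s ^ 5 + (2 : K) * t ^ 6 * s + (6 : K) * t ^ 6 * s ^ 2 + (6 : K) * t ^ 6 * s ^ 3 + (2 : K) * t ^ 6 * s ^ 4 + (2 : K) * t ^ 7 * s + (2 : K) * t ^ 7 * s ^ 2) * he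
  refine ⟨Point.some _ _ hNS, ?_⟩
  rw [two_nsmul, add_of_Y_ne hyne]
  exact some_eq_some' hxcoord hycoord _ _

open Classical in
open WeierstrassCurve.Affine WeierstrassCurve.Affine.Point in
theorem div_two_of_x_eq_lambda_iff {K : Type*} [Field K] (h2 : (2 : K) ≠ 0)
    (lam : K) (h0 : lam ≠ 0) (h1 : lam ≠ 1) (hm1 : lam ≠ -1)
    (yQ : K) (hQ : (cubicCurve (-(lam ^ 2)) (-1) 0).Nonsingular lam yQ) :
    (∃ R : (cubicCurve (-(lam ^ 2)) (-1) 0).Point,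
        2 • R = WeierstrassCurve.Affine.Point.some _ _ hQ) ↔
      ∃ c : K, GoodParam c ∧ lam = ((c - 1 / c) / 2) ^ 2 := by
  let W := cubicCurve (-(lam ^ 2)) (-1) 0
  have hW : W = cubicCurve (-(lam ^ 2)) (-1) 0 := rfl
  have ha1 : W.a₁ = 0 := rfl
  have ha3 : W.a₃ = 0 := rfl
  have ha2 : W.a₂ = lam ^ 2 + 1 := by show -(-(lam ^ 2) + -1 + 0) = _; ring
  have ha4 : W.a₄ = lam ^ 2 := by
    show -(lam ^ 2) * -1 + -1 * 0 + 0 * -(lam ^ 2) = _; ring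
  have ha6 : W.a₆ = 0 := by show -(-(lam ^ 2) * -1 * 0) = _; ring
  have hneg : ∀ a b : K, W.negY a b = -b := by
    intro a b; rw [negY, ha1, ha3]; ring
  constructor
  · rintro ⟨R, hR⟩
    rw [two_nsmul] at hR
    obtain _ | @⟨x, y, h⟩ := R
    · rw [show (WeierstrassCurve.Affine.Point.zero : W.Point) = 0 from rfl, add_zero] at hR
      exact absurd hR.symm (some_ne_zero hQ)
    · by_cases hy : y = W.negY x y
      · rw [add_of_Y_eq rfl hy] at hR
        exact absurd hR.symm (some_ne_zero hQ)
      · rw [add_of_Y_ne hy] at hR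
        have hy0 : y ≠ 0 := by
          intro h'; apply hy; rw [hneg, h']; ring
        have h2y : (2 : K) * y ≠ 0 := mul_ne_zero h2 hy0
        have heq : y ^ 2 = x ^ 3 + (lam ^ 2 + 1) * x ^ 2 + lam ^ 2 * x := by
          have h' := (W.equation_iff x y).mp h.1
          rw [ha1, ha2, ha3, ha4, ha6] at h'
          linear_combination h'
        have hxc : W.addX x x (W.slope x x y y) = lam := by
          injection hR with h' _
        have hL : W.slope x x y y =
            (3 * x ^ 2 + 2 * (lam ^ 2 + 1) * x + lam ^ 2) / (2 * y) := by
          rw [slope_of_Y_ne rfl hy, ha1, ha2, ha4, hneg]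
          rw [div_eq_div_iff (fun hcon => hy0 ((mul_eq_zero.mp
            (show 2 * y = 0 by linear_combination hcon)).resolve_left h2)) h2y]
          ring
        rw [addX, hL, ha1, ha2] at hxc
        have e1 : ((3 * x ^ 2 + 2 * (lam ^ 2 + 1) * x + lam ^ 2) / (2 * y)) ^ 2
            = lam + (lam ^ 2 + 1) + 2 * x := by linear_combination hxc
        have e2 : (3 * x ^ 2 + 2 * (lam ^ 2 + 1) * x + lam ^ 2) ^ 2
            = (lam + (lam ^ 2 + 1) + 2 * x) * (2 * y) ^ 2 := by
          rw [← e1, div_pow, div_mul_cancel₀]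
          exact pow_ne_zero 2 h2y
        have key : (x ^ 2 - lam ^ 2) ^ 2 = lam * (2 * y) ^ 2 := by
          linear_combination e2 + (4 * (lam ^ 2 + 1) + 8 * x) * heq
        have key2 : (x ^ 2 + 2 * x + lam ^ 2) ^ 2 = (lam + 1) * (2 * y) ^ 2 := by
          linear_combination e2 + (4 * (lam ^ 2 + 1) + 8 * x - 4) * heq
        obtain ⟨T, hT⟩ : ∃ T : K, T = (x ^ 2 - lam ^ 2) / (2 * y) := ⟨_, rfl⟩
        obtain ⟨S, hS⟩ : ∃ S : K, S = (x ^ 2 + 2 * x + lam ^ 2) / (2 * y) := ⟨_, rfl⟩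
        have hT2 : T ^ 2 = lam := by
          rw [hT, div_pow, key, mul_div_assoc, div_self (pow_ne_zero 2 h2y), mul_one]
        have hS2 : S ^ 2 = lam + 1 := by
          rw [hS, div_pow, key2, mul_div_assoc, div_self (pow_ne_zero 2 h2y), mul_one]
        have hst : (S + T) * (S - T) = 1 := by
          linear_combination hS2 - hT2
        have hc0 : S + T ≠ 0 := by
          intro h'; rw [h', zero_mul] at hst; exact one_ne_zero hst.symm
        have hinv : 1 / (S + T) = S - T := by
          rw [div_eq_iff hc0]; linear_combination -hst
        have hTval : ((S + T) - 1 / (S + T)) / 2 = T := by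
          rw [hinv, show (S + T) - (S - T) = 2 * T from by ring,
            mul_div_cancel_left₀ _ h2]
        refine ⟨S + T, ⟨hc0, ?_, ?_, ?_, ?_⟩, ?_⟩
        · intro h'
          have hd : S - T = 1 := by rw [← hinv, h']; norm_num
          have ht' : T = 0 := by
            have : 2 * T = 0 := by linear_combination h' - hd
            rcases mul_eq_zero.mp this with h'' | h''
            · exact absurd h'' h2
            · exact h''
          exact h0 (by rw [← hT2, ht']; ring)
        · intro h'
          have hd : S - T = -1 := by rw [← hinv, h']; norm_num
          have ht' : T = 0 := by
            have : 2 * T = 0 := by linear_combination h' - hd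
            rcases mul_eq_zero.mp this with h'' | h''
            · exact absurd h'' h2
            · exact h''
          exact h0 (by rw [← hT2, ht']; ring)
        · rw [hTval, hT2]; exact h1
        · rw [hTval, hT2]; exact hm1
        · rw [hTval, hT2]
  · rintro ⟨c, ⟨hc0, hc1, hcm1, hn1, hnm1⟩, hlam⟩
    have hgp2 : ((c - 1 / c) / 2) ≠ 0 := by
      intro h'; rw [h'] at hlam; exact h0 (by rw [hlam]; ring)
    obtain ⟨t, s, hs, hlam'⟩ : ∃ t s : K, s ^ 2 = t ^ 2 + 1 ∧ lam = t ^ 2 := by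
      refine ⟨(c - 1 / c) / 2, (c + 1 / c) / 2, ?_, hlam⟩
      field_simp
      ring
    clear hlam hn1 hnm1 hc1 hcm1 hc0 hgp2
    subst hlam'
    have ht0 : t ≠ 0 := fun h' => h0 (by rw [h']; ring)
    have ht1 : 1 + t ≠ 0 := by
      intro h'
      have : t = -1 := by linear_combination h'
      exact h1 (by rw [this]; ring)
    have hs0 : s ≠ 0 := by
      intro h'
      rw [h'] at hs
      exact hm1 (by linear_combination - hs)
    have hs1 : 1 + s ≠ 0 := by
      intro h'
      have hsm : s = -1 := by linear_combination h'
      rw [hsm] at hs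
      exact h0 (by linear_combination -hs)
    exact exists_half h2 t s hs ht0 ht1 hs0 hs1 yQ hQ
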